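/- There is a deterministic comparison-based algorithm computing the maximum over all n sliding windows of length n in a string of length 2n-1, using O(n log n) comparisons and O(log n) words of working memory. -/
import Mathlib


/-- A deterministic comparison-based branching program: at each state it compares two
input positions and branches; states may emit outputs `(i, p)` asserting that the
maximum of window `i` is the input value at position `p`. -/
def bpRun {M : ℕ} {α : Type} [LinearOrder α]
    (start : Fin M) (query : Fin M → ℕ × ℕ) (next : Fin M → Bool → Fin M)
    (x : ℕ → α) : ℕ → Fin M
  | 0 => start
  | t + 1 =>
    let s := bpRun start query next x t
    next s (decide (x (query s).1 ≤ x (query s).2))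

namespace Stmt17

structure St where
  ph : ℕ
  a : ℕ
  b : ℕ
  j : ℕ
  p : ℕ
  r : ℕ
deriving DecidableEq

def mid (a b : ℕ) : ℕ := (a + b) / 2

def scanEntry (a b : ℕ) : St := ⟨0, a, b, mid a b + 1, mid a b, 0⟩

def haltSt : St := ⟨3, 0, 0, 0, 0, 0⟩

def queryS (n : ℕ) (σ : St) : ℕ × ℕ :=
  if σ.ph = 0 then (σ.p, σ.j)
  else if σ.ph = 1 then (σ.r, σ.j - 1)
  else (σ.r, σ.j + n)

def stepS (n : ℕ) (σ : St) (c : Bool) : St :=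
  if σ.ph = 0 then
    if σ.j < mid σ.a σ.b + n then
      ⟨0, σ.a, σ.b, σ.j + 1, if c then σ.j else σ.p, σ.r⟩
    else if σ.p ≤ σ.a + n - 1 then ⟨1, σ.a, σ.b, mid σ.a σ.b, σ.p, σ.p⟩
    else ⟨2, σ.a, σ.b, mid σ.a σ.b, σ.p, σ.p⟩
  else if σ.ph = 1 then
    if σ.a < σ.j then ⟨1, σ.a, σ.b, σ.j - 1, σ.p, if c then σ.j - 1 else σ.r⟩
    else if mid σ.a σ.b + 1 ≤ σ.b then scanEntry (mid σ.a σ.b + 1) σ.b else haltSt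
  else if σ.ph = 2 then
    if σ.j < σ.b then ⟨2, σ.a, σ.b, σ.j + 1, σ.p, if c then σ.j + n else σ.r⟩
    else if σ.a + 1 ≤ mid σ.a σ.b then scanEntry σ.a (mid σ.a σ.b - 1) else haltSt
  else haltSt

def emitS (σ : St) : Option (ℕ × ℕ) :=
  if σ.ph = 1 ∨ σ.ph = 2 then some (σ.j, σ.r) else none

variable {α : Type} [LinearOrder α]

def absRun (n : ℕ) (x : ℕ → α) : ℕ → St
  | 0 => scanEntry 0 (n - 1)
  | t + 1 =>
    let σ := absRun n x t
    stepS n σ (decide (x (queryS n σ).1 ≤ x (queryS n σ).2))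

def Inv (n : ℕ) (x : ℕ → α) (σ : St) : Prop :=
  (σ.ph = 0 ∧ σ.a ≤ σ.b ∧ σ.b ≤ n - 1 ∧
     mid σ.a σ.b + 1 ≤ σ.j ∧ σ.j ≤ mid σ.a σ.b + n ∧
     mid σ.a σ.b ≤ σ.p ∧ σ.p < σ.j ∧ σ.r = 0 ∧
     (∀ k, mid σ.a σ.b ≤ k → k < σ.j → x k ≤ x σ.p)) ∨
  (σ.ph = 1 ∧ σ.a ≤ σ.b ∧ σ.b ≤ n - 1 ∧
     σ.a ≤ σ.j ∧ σ.j ≤ mid σ.a σ.b ∧ σ.p < 2 * n ∧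
     σ.j ≤ σ.r ∧ σ.r ≤ σ.a + n - 1 ∧
     (∀ k, σ.j ≤ k → k < σ.j + n → x k ≤ x σ.r)) ∨
  (σ.ph = 2 ∧ σ.a ≤ σ.b ∧ σ.b ≤ n - 1 ∧
     mid σ.a σ.b ≤ σ.j ∧ σ.j ≤ σ.b ∧ σ.p < 2 * n ∧
     σ.b < σ.r ∧ σ.r < σ.j + n ∧
     (∀ k, σ.j ≤ k → k < σ.j + n → x k ≤ x σ.r)) ∨
  σ = haltSt

lemma mid_le_left {a b : ℕ} (h : a ≤ b) : a ≤ mid a b := by unfold mid; omega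
lemma mid_le_right {a b : ℕ} (h : a ≤ b) : mid a b ≤ b := by unfold mid; omega

lemma inv_init (n : ℕ) (hn : 2 ≤ n) (x : ℕ → α) : Inv n x (scanEntry 0 (n - 1)) := by
  left
  refine ⟨rfl, Nat.zero_le _, le_refl _, le_refl _,
    show mid 0 (n-1) + 1 ≤ mid 0 (n-1) + n by omega, le_refl _,
    Nat.lt_succ_self _, rfl, ?_⟩
  intro k h1 h2
  have hk : k = mid 0 (n-1) := by
    simp only [scanEntry] at h1 h2
    omega
  exact le_of_eq (by rw [hk]; rfl)

lemma inv_step (n : ℕ) (hn : 2 ≤ n) (x : ℕ → α) (σ : St) (h : Inv n x σ) :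
    Inv n x (stepS n σ (decide (x (queryS n σ).1 ≤ x (queryS n σ).2))) := by
  have hmid : 2 * mid σ.a σ.b ≤ σ.a + σ.b ∧ σ.a + σ.b ≤ 2 * mid σ.a σ.b + 1 := by
    unfold mid; omega
  rcases h with ⟨h0, hab, hb, hj1, hj2, hp1, hp2, hr, hw⟩ |
    ⟨h1, hab, hb, hj1, hj2, hp, hr1, hr2, hw⟩ |
    ⟨h2, hab, hb, hj1, hj2, hp, hr1, hr2, hw⟩ | hh
  · -- phase 0 : scanning
    have hq : queryS n σ = (σ.p, σ.j) := by simp [queryS, h0]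
    rw [hq]
    unfold stepS
    rw [if_pos h0]
    by_cases hj : σ.j < mid σ.a σ.b + n
    · rw [if_pos hj]
      refine Or.inl ⟨rfl, hab, hb, ?_, ?_, ?_, ?_, hr, ?_⟩ <;> try dsimp only
      · omega
      · omega
      · by_cases hc : x σ.p ≤ x σ.j <;> simp [hc] <;> omega
      · by_cases hc : x σ.p ≤ x σ.j <;> simp [hc] <;> omega
      · intro k hk1 hk2
        by_cases hc : x σ.p ≤ x σ.j
        · rw [if_pos (by simpa using hc)]
          rcases Nat.lt_or_ge k σ.j with hk | hk
          · exact le_trans (hw k hk1 hk) hc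
          · have : k = σ.j := by omega
            simp [this]
        · rw [if_neg (by simpa using hc)]
          rcases Nat.lt_or_ge k σ.j with hk | hk
          · exact hw k hk1 hk
          · have : k = σ.j := by omega
            rw [this]
            exact le_of_not_ge hc
    · rw [if_neg hj]
      have hjn : σ.j = mid σ.a σ.b + n := by omega
      by_cases hp : σ.p ≤ σ.a + n - 1
      · rw [if_pos hp]
        refine Or.inr (Or.inl ⟨rfl, hab, hb, ?_, le_refl _, ?_, hp1, hp, ?_⟩) <;> try dsimp only
        · omega
        · omega
        · intro k hk1 hk2
          exact hw k hk1 (by omega)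
      · rw [if_neg hp]
        refine Or.inr (Or.inr (Or.inl ⟨rfl, hab, hb, le_refl _, ?_, ?_, ?_, ?_, ?_⟩)) <;>
          dsimp only
        · omega
        · omega
        · omega
        · omega
        · intro k hk1 hk2
          exact hw k hk1 (by omega)
  · -- phase 1 : sliding left
    have hq : queryS n σ = (σ.r, σ.j - 1) := by simp [queryS, h1]
    rw [hq]
    unfold stepS
    rw [if_neg (by omega : ¬ σ.ph = 0), if_pos h1]
    by_cases hja : σ.a < σ.j
    · rw [if_pos hja]
      refine Or.inr (Or.inl ⟨rfl, hab, hb, ?_, ?_, hp, ?_, ?_, ?_⟩) <;> try dsimp only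
      · omega
      · omega
      · by_cases hc : x σ.r ≤ x (σ.j - 1) <;> simp [hc] <;> omega
      · by_cases hc : x σ.r ≤ x (σ.j - 1) <;> simp [hc] <;> omega
      · intro k hk1 hk2
        by_cases hc : x σ.r ≤ x (σ.j - 1)
        · rw [if_pos (by simpa using hc)]
          rcases Nat.lt_or_ge k σ.j with hk | hk
          · have : k = σ.j - 1 := by omega
            simp [this]
          · exact le_trans (hw k hk (by omega)) hc
        · rw [if_neg (by simpa using hc)]
          rcases Nat.lt_or_ge k σ.j with hk | hk
          · have : k = σ.j - 1 := by omega
            rw [this]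
            exact le_of_not_ge hc
          · exact hw k hk (by omega)
    · -- j = a : end of left slide, new region or halt
      rw [if_neg hja]
      by_cases hmb : mid σ.a σ.b + 1 ≤ σ.b
      · rw [if_pos hmb]
        have hmid2 : 2 * mid (mid σ.a σ.b + 1) σ.b ≤ mid σ.a σ.b + 1 + σ.b ∧
            mid σ.a σ.b + 1 + σ.b ≤ 2 * mid (mid σ.a σ.b + 1) σ.b + 1 := by
          unfold mid; omega
        refine Or.inl ⟨rfl, ?_, ?_, ?_, ?_, ?_, ?_, rfl, ?_⟩ <;>
          try simp only [scanEntry]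
        · omega
        · omega
        · omega
        · omega
        · omega
        · omega
        · intro k hk1 hk2
          have : k = mid (mid σ.a σ.b + 1) σ.b := by omega
          rw [this]
      · rw [if_neg hmb]
        exact Or.inr (Or.inr (Or.inr rfl))
  · -- phase 2 : sliding right
    have hq : queryS n σ = (σ.r, σ.j + n) := by simp [queryS, h2]
    rw [hq]
    unfold stepS
    rw [if_neg (by omega : ¬ σ.ph = 0), if_neg (by omega : ¬ σ.ph = 1), if_pos h2]
    by_cases hjb : σ.j < σ.b
    · rw [if_pos hjb]
      refine Or.inr (Or.inr (Or.inl ⟨rfl, hab, hb, ?_, ?_, hp, ?_, ?_, ?_⟩)) <;> try dsimp only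
      · omega
      · omega
      · by_cases hc : x σ.r ≤ x (σ.j + n) <;> simp [hc] <;> omega
      · by_cases hc : x σ.r ≤ x (σ.j + n) <;> simp [hc] <;> omega
      · intro k hk1 hk2
        by_cases hc : x σ.r ≤ x (σ.j + n)
        · rw [if_pos (by simpa using hc)]
          rcases Nat.lt_or_ge k (σ.j + n) with hk | hk
          · exact le_trans (hw k (by omega) hk) hc
          · have : k = σ.j + n := by omega
            simp [this]
        · rw [if_neg (by simpa using hc)]
          rcases Nat.lt_or_ge k (σ.j + n) with hk | hk
          · exact hw k (by omega) hk
          · have : k = σ.j + n := by omega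
            rw [this]
            exact le_of_not_ge hc
    · rw [if_neg hjb]
      by_cases ham : σ.a + 1 ≤ mid σ.a σ.b
      · rw [if_pos ham]
        have hmid2 : 2 * mid σ.a (mid σ.a σ.b - 1) ≤ σ.a + (mid σ.a σ.b - 1) ∧
            σ.a + (mid σ.a σ.b - 1) ≤ 2 * mid σ.a (mid σ.a σ.b - 1) + 1 := by
          unfold mid; omega
        refine Or.inl ⟨rfl, ?_, ?_, ?_, ?_, ?_, ?_, rfl, ?_⟩ <;>
          try simp only [scanEntry]
        · omega
        · omega
        · omega
        · omega
        · omega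
        · omega
        · intro k hk1 hk2
          have : k = mid σ.a (mid σ.a σ.b - 1) := by omega
          rw [this]
      · rw [if_neg ham]
        exact Or.inr (Or.inr (Or.inr rfl))
  · -- halted
    rw [hh]
    unfold stepS
    norm_num [haltSt]
    exact Or.inr (Or.inr (Or.inr rfl))

lemma inv_all (n : ℕ) (hn : 2 ≤ n) (x : ℕ → α) (t : ℕ) : Inv n x (absRun n x t) := by
  induction t with
  | zero => exact inv_init n hn x
  | succ t ih => exact inv_step n hn x _ ih

lemma emit_correct (n : ℕ) (hn : 2 ≤ n) (x : ℕ → α) (σ : St) (h : Inv n x σ)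
    (i pp : ℕ) (he : emitS σ = some (i, pp)) :
    i < n ∧ i ≤ pp ∧ pp < i + n ∧ ∀ k, i ≤ k → k < i + n → x k ≤ x pp := by
  have hmid : 2 * mid σ.a σ.b ≤ σ.a + σ.b ∧ σ.a + σ.b ≤ 2 * mid σ.a σ.b + 1 := by
    unfold mid; omega
  rcases h with ⟨h0, hab, hb, hj1, hj2, hp1, hp2, hr, hw⟩ |
    ⟨h1, hab, hb, hj1, hj2, hp, hr1, hr2, hw⟩ |
    ⟨h2, hab, hb, hj1, hj2, hp, hr1, hr2, hw⟩ | hh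
  · simp [emitS, h0] at he
  · unfold emitS at he
    rw [if_pos (Or.inl h1)] at he
    simp only [Option.some.injEq, Prod.mk.injEq] at he
    obtain ⟨hi, hpp⟩ := he
    subst hi; subst hpp
    exact ⟨by omega, hr1, by omega, hw⟩
  · unfold emitS at he
    rw [if_pos (Or.inr h2)] at he
    simp only [Option.some.injEq, Prod.mk.injEq] at he
    obtain ⟨hi, hpp⟩ := he
    subst hi; subst hpp
    exact ⟨by omega, by omega, by omega, hw⟩
  · rw [hh] at he
    simp [emitS, haltSt] at he

/-- scan progression -/
lemma scan_run (n : ℕ) (hn : 2 ≤ n) (x : ℕ → α) (t a b : ℕ) (hab : a ≤ b) (hb : b ≤ n - 1)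
    (h : absRun n x t = scanEntry a b) :
    ∀ d, d ≤ n - 1 → ∃ p, mid a b ≤ p ∧ p < mid a b + 1 + d ∧
      (∀ k, mid a b ≤ k → k < mid a b + 1 + d → x k ≤ x p) ∧
      absRun n x (t + d) = ⟨0, a, b, mid a b + 1 + d, p, 0⟩ := by
  intro d
  induction d with
  | zero =>
    intro _
    refine ⟨mid a b, le_refl _, by omega, ?_, by simpa [scanEntry] using h⟩
    intro k h1 h2
    have : k = mid a b := by omega
    rw [this]
  | succ d ih =>
    intro hd
    obtain ⟨p, hp1, hp2, hw, hst⟩ := ih (by omega)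
    have hstep : absRun n x (t + (d + 1)) =
        stepS n ⟨0, a, b, mid a b + 1 + d, p, 0⟩ (decide (x p ≤ x (mid a b + 1 + d))) := by
      have ht : t + (d + 1) = (t + d) + 1 := by omega
      rw [ht]
      show stepS n (absRun n x (t + d)) _ = _
      rw [hst]
      simp [queryS]
    rw [hstep]
    unfold stepS
    dsimp only
    rw [if_pos rfl, if_pos (show mid a b + 1 + d < mid a b + n by omega)]
    have hidx : mid a b + 1 + (d + 1) = mid a b + 1 + d + 1 := by omega
    by_cases hc : x p ≤ x (mid a b + 1 + d)
    · refine ⟨mid a b + 1 + d, by omega, by omega, ?_, ?_⟩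
      · intro k h1 h2
        rcases Nat.lt_or_ge k (mid a b + 1 + d) with hk | hk
        · exact le_trans (hw k h1 hk) hc
        · have : k = mid a b + 1 + d := by omega
          rw [this]
      · rw [if_pos (by simpa using hc), hidx]
    · refine ⟨p, hp1, by omega, ?_, ?_⟩
      · intro k h1 h2
        rcases Nat.lt_or_ge k (mid a b + 1 + d) with hk | hk
        · exact hw k h1 hk
        · have : k = mid a b + 1 + d := by omega
          rw [this]
          exact le_of_not_ge hc
      · rw [if_neg (by simpa using hc), hidx]

lemma scan_finish (n : ℕ) (hn : 2 ≤ n) (x : ℕ → α) (t a b : ℕ) (hab : a ≤ b) (hb : b ≤ n - 1)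
    (h : absRun n x t = scanEntry a b) :
    ∃ p, mid a b ≤ p ∧ p < mid a b + n ∧
      (∀ k, mid a b ≤ k → k < mid a b + n → x k ≤ x p) ∧
      absRun n x (t + n) = ⟨if p ≤ a + n - 1 then 1 else 2, a, b, mid a b, p, p⟩ := by
  obtain ⟨p, hp1, hp2, hw, hst⟩ := scan_run n hn x t a b hab hb h (n - 1) (le_refl _)
  have hidx : mid a b + 1 + (n - 1) = mid a b + n := by omega
  rw [hidx] at hp2 hw hst
  refine ⟨p, hp1, hp2, hw, ?_⟩
  have ht : t + n = (t + (n - 1)) + 1 := by omega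
  rw [ht]
  show stepS n (absRun n x (t + (n - 1))) _ = _
  rw [hst]
  have hq : queryS n (⟨0, a, b, mid a b + n, p, 0⟩ : St) = (p, mid a b + n) := by
    simp [queryS]
  rw [hq]
  unfold stepS
  dsimp only
  rw [if_pos rfl, if_neg (show ¬ (mid a b + n < mid a b + n) by omega)]
  by_cases hp : p ≤ a + n - 1
  · rw [if_pos hp, if_pos hp]
  · rw [if_neg hp, if_neg hp]

lemma slideL_run (n : ℕ) (hn : 2 ≤ n) (x : ℕ → α) (t a b p : ℕ) (hab : a ≤ b)
    (h : absRun n x t = ⟨1, a, b, mid a b, p, p⟩) :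
    ∀ d, d ≤ mid a b - a → ∃ r, absRun n x (t + d) = ⟨1, a, b, mid a b - d, p, r⟩ := by
  intro d
  induction d with
  | zero =>
    intro _
    exact ⟨p, by simpa using h⟩
  | succ d ih =>
    intro hd
    obtain ⟨r, hst⟩ := ih (by omega)
    have hidx : mid a b - d - 1 = mid a b - (d + 1) := by omega
    refine ⟨if decide (x r ≤ x (mid a b - d - 1)) = true then mid a b - d - 1 else r, ?_⟩
    have ht : t + (d + 1) = (t + d) + 1 := by omega
    rw [ht]
    show stepS n (absRun n x (t + d)) _ = _
    rw [hst]
    have hq : queryS n (⟨1, a, b, mid a b - d, p, r⟩ : St) = (r, mid a b - d - 1) := by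
      simp [queryS]
    rw [hq]
    unfold stepS
    dsimp only
    rw [if_neg (by omega), if_pos rfl, if_pos (show a < mid a b - d by omega)]
    rw [hidx]

lemma slideL_finish (n : ℕ) (hn : 2 ≤ n) (x : ℕ → α) (t a b p : ℕ) (hab : a ≤ b)
    (h : absRun n x t = ⟨1, a, b, mid a b, p, p⟩) :
    absRun n x (t + (mid a b - a) + 1) =
      if mid a b + 1 ≤ b then scanEntry (mid a b + 1) b else haltSt := by
  obtain ⟨r, hst⟩ := slideL_run n hn x t a b p hab h (mid a b - a) (le_refl _)
  have hja : mid a b - (mid a b - a) = a := by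
    have := mid_le_left hab; omega
  rw [hja] at hst
  show stepS n (absRun n x (t + (mid a b - a))) _ = _
  rw [hst]
  unfold stepS
  dsimp only
  rw [if_neg (by omega), if_pos rfl, if_neg (show ¬ (a < a) by omega)]

lemma slideR_run (n : ℕ) (hn : 2 ≤ n) (x : ℕ → α) (t a b p : ℕ) (hab : a ≤ b)
    (h : absRun n x t = ⟨2, a, b, mid a b, p, p⟩) :
    ∀ d, d ≤ b - mid a b → ∃ r, absRun n x (t + d) = ⟨2, a, b, mid a b + d, p, r⟩ := by
  intro d
  induction d with
  | zero =>
    intro _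
    exact ⟨p, by simpa using h⟩
  | succ d ih =>
    intro hd
    obtain ⟨r, hst⟩ := ih (by omega)
    refine ⟨if decide (x r ≤ x (mid a b + d + n)) = true then mid a b + d + n else r, ?_⟩
    have ht : t + (d + 1) = (t + d) + 1 := by omega
    rw [ht]
    show stepS n (absRun n x (t + d)) _ = _
    rw [hst]
    have hq : queryS n (⟨2, a, b, mid a b + d, p, r⟩ : St) = (r, mid a b + d + n) := by
      simp [queryS]
    rw [hq]
    unfold stepS
    dsimp only
    rw [if_neg (by omega), if_neg (by omega), if_pos rfl,
      if_pos (show mid a b + d < b by have := mid_le_right hab; omega)]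
    rfl

lemma slideR_finish (n : ℕ) (hn : 2 ≤ n) (x : ℕ → α) (t a b p : ℕ) (hab : a ≤ b)
    (h : absRun n x t = ⟨2, a, b, mid a b, p, p⟩) :
    absRun n x (t + (b - mid a b) + 1) =
      if a + 1 ≤ mid a b then scanEntry a (mid a b - 1) else haltSt := by
  obtain ⟨r, hst⟩ := slideR_run n hn x t a b p hab h (b - mid a b) (le_refl _)
  have hjb : mid a b + (b - mid a b) = b := by
    have := mid_le_right hab; omega
  rw [hjb] at hst
  show stepS n (absRun n x (t + (b - mid a b))) _ = _
  rw [hst]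
  unfold stepS
  dsimp only
  rw [if_neg (by omega), if_neg (by omega), if_pos rfl, if_neg (show ¬ (b < b) by omega)]

lemma live (n : ℕ) (hn : 2 ≤ n) (x : ℕ → α) :
    ∀ k t a b, absRun n x t = scanEntry a b → a ≤ b → b ≤ n - 1 →
    b - a < 2 ^ k → ∀ i, a ≤ i → i ≤ b →
    ∃ t', t' ≤ t + 2 * n * (k + 1) ∧ ∃ pp, emitS (absRun n x t') = some (i, pp) := by
  intro k
  induction k with
  | zero =>
    intro t a b h hab hb hsz i hi1 hi2
    have hab' : a = b := by omega
    have hm : 2 * mid a b ≤ a + b ∧ a + b ≤ 2 * mid a b + 1 := by unfold mid; omega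
    have hma : mid a b = a := by omega
    obtain ⟨p, hp1, hp2, hw, hst⟩ := scan_finish n hn x t a b hab hb h
    have hp : p ≤ a + n - 1 := by omega
    rw [if_pos hp] at hst
    obtain ⟨r, hsl⟩ := slideL_run n hn x (t + n) a b p hab hst 0 (by omega)
    have hi : i = mid a b - 0 := by omega
    refine ⟨t + n + 0, ?_, r, ?_⟩
    · have h2n : 2 * n ≤ 2 * n * (0 + 1) := by omega
      omega
    · rw [hsl, hi]
      simp [emitS]
  | succ k ih =>
    intro t a b h hab hb hsz i hi1 hi2
    have hm : 2 * mid a b ≤ a + b ∧ a + b ≤ 2 * mid a b + 1 := by unfold mid; omega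
    have hpow : 1 ≤ 2 ^ k := Nat.one_le_two_pow
    have hsz' : b - a < 2 ^ k * 2 := by rw [← pow_succ]; exact hsz
    have hmul : 2 * n * (k + 1 + 1) = 2 * n + 2 * n * (k + 1) := by ring
    have h2n : 2 * n ≤ 2 * n * (k + 1) := Nat.le_mul_of_pos_right _ (by omega)
    obtain ⟨p, hp1, hp2, hw, hst⟩ := scan_finish n hn x t a b hab hb h
    by_cases hp : p ≤ a + n - 1
    · rw [if_pos hp] at hst
      rcases le_or_gt i (mid a b) with him | him
      · -- covered by the left slide
        obtain ⟨r, hsl⟩ := slideL_run n hn x (t + n) a b p hab hst (mid a b - i) (by omega)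
        have hi : mid a b - (mid a b - i) = i := by omega
        rw [hi] at hsl
        refine ⟨t + n + (mid a b - i), by omega, r, ?_⟩
        rw [hsl]
        simp [emitS]
      · -- recurse on the right part
        have hmb : mid a b + 1 ≤ b := by omega
        have hfin := slideL_finish n hn x (t + n) a b p hab hst
        rw [if_pos hmb] at hfin
        obtain ⟨t', ht', hpp⟩ := ih (t + n + (mid a b - a) + 1) (mid a b + 1) b hfin
          hmb hb (by omega) i (by omega) hi2
        exact ⟨t', by omega, hpp⟩
    · rw [if_neg hp] at hst
      rcases le_or_gt (mid a b) i with him | him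
      · -- covered by the right slide
        obtain ⟨r, hsl⟩ := slideR_run n hn x (t + n) a b p hab hst (i - mid a b) (by omega)
        have hi : mid a b + (i - mid a b) = i := by omega
        rw [hi] at hsl
        refine ⟨t + n + (i - mid a b), by omega, r, ?_⟩
        rw [hsl]
        simp [emitS]
      · -- recurse on the left part
        have ham : a + 1 ≤ mid a b := by omega
        have hfin := slideR_finish n hn x (t + n) a b p hab hst
        rw [if_pos ham] at hfin
        obtain ⟨t', ht', hpp⟩ := ih (t + n + (b - mid a b) + 1) a (mid a b - 1) hfin
          (by omega) (by omega) (by omega) i hi1 (by omega)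
        exact ⟨t', by omega, hpp⟩

def stEncode (σ : St) : ℕ :=
  Nat.pair σ.ph (Nat.pair σ.a (Nat.pair σ.b (Nat.pair σ.j (Nat.pair σ.p σ.r))))

def stDecode (v : ℕ) : St :=
  ⟨v.unpair.1, v.unpair.2.unpair.1, v.unpair.2.unpair.2.unpair.1,
   v.unpair.2.unpair.2.unpair.2.unpair.1,
   v.unpair.2.unpair.2.unpair.2.unpair.2.unpair.1,
   v.unpair.2.unpair.2.unpair.2.unpair.2.unpair.2⟩

lemma decode_encode (σ : St) : stDecode (stEncode σ) = σ := by
  simp [stDecode, stEncode, Nat.unpair_pair]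

lemma pair_lt {a b K : ℕ} (ha : a < K) (hb : b < K) : Nat.pair a b < K * K := by
  unfold Nat.pair; split <;> nlinarith

def Bnd (n : ℕ) (σ : St) : Prop :=
  σ.ph < 2*n ∧ σ.a < 2*n ∧ σ.b < 2*n ∧ σ.j < 2*n ∧ σ.p < 2*n ∧ σ.r < 2*n

lemma inv_bnd (n : ℕ) (hn : 2 ≤ n) (x : ℕ → α) (σ : St) (h : Inv n x σ) : Bnd n σ := by
  have hm : 2 * mid σ.a σ.b ≤ σ.a + σ.b ∧ σ.a + σ.b ≤ 2 * mid σ.a σ.b + 1 := by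
    unfold mid; omega
  rcases h with ⟨h0, hab, hb, hj1, hj2, hp1, hp2, hr, hw⟩ |
    ⟨h1, hab, hb, hj1, hj2, hp, hr1, hr2, hw⟩ |
    ⟨h2, hab, hb, hj1, hj2, hp, hr1, hr2, hw⟩ | hh
  · exact ⟨by omega, by omega, by omega, by omega, by omega, by omega⟩
  · exact ⟨by omega, by omega, by omega, by omega, by omega, by omega⟩
  · exact ⟨by omega, by omega, by omega, by omega, by omega, by omega⟩
  · rw [hh]
    refine ⟨?_, ?_, ?_, ?_, ?_, ?_⟩ <;> simp [haltSt] <;> omega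

def Mn (n : ℕ) : ℕ := (2*n)^32

lemma Mpos (n : ℕ) (hn : 2 ≤ n) : 0 < Mn n := by
  unfold Mn; positivity

lemma encode_lt {n : ℕ} (hn : 2 ≤ n) {σ : St} (h : Bnd n σ) : stEncode σ < Mn n := by
  obtain ⟨b1, b2, b3, b4, b5, b6⟩ := h
  have hself : ∀ m k : ℕ, 0 < m → 1 ≤ k → m ≤ m ^ k := by
    intro m k hm hk
    calc m = m ^ 1 := (pow_one m).symm
    _ ≤ m ^ k := Nat.pow_le_pow_right hm hk
  have h5 : Nat.pair σ.p σ.r < (2*n)^2 := by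
    rw [pow_two]; exact pair_lt b5 b6
  have h4 : Nat.pair σ.j (Nat.pair σ.p σ.r) < (2*n)^4 := by
    rw [show (2*n)^4 = (2*n)^2 * (2*n)^2 by ring]
    exact pair_lt (lt_of_lt_of_le b4 (hself _ 2 (by omega) (by omega))) h5
  have h3 : Nat.pair σ.b (Nat.pair σ.j (Nat.pair σ.p σ.r)) < (2*n)^8 := by
    rw [show (2*n)^8 = (2*n)^4 * (2*n)^4 by ring]
    exact pair_lt (lt_of_lt_of_le b3 (hself _ 4 (by omega) (by omega))) h4
  have h2 : Nat.pair σ.a (Nat.pair σ.b (Nat.pair σ.j (Nat.pair σ.p σ.r))) < (2*n)^16 := by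
    rw [show (2*n)^16 = (2*n)^8 * (2*n)^8 by ring]
    exact pair_lt (lt_of_lt_of_le b2 (hself _ 8 (by omega) (by omega))) h3
  unfold Mn stEncode
  rw [show (2*n)^32 = (2*n)^16 * (2*n)^16 by ring]
  exact pair_lt (lt_of_lt_of_le b1 (hself _ 16 (by omega) (by omega))) h2

lemma bridge (n : ℕ) (hn : 2 ≤ n) (x : ℕ → α) (t : ℕ) :
    (bpRun (⟨stEncode (scanEntry 0 (n-1)) % Mn n, Nat.mod_lt _ (Mpos n hn)⟩ : Fin (Mn n))
      (fun s => queryS n (stDecode s.val))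
      (fun s c => ⟨stEncode (stepS n (stDecode s.val) c) % Mn n, Nat.mod_lt _ (Mpos n hn)⟩)
      x t).val = stEncode (absRun n x t) := by
  induction t with
  | zero =>
    simp only [bpRun]
    exact Nat.mod_eq_of_lt (encode_lt hn (inv_bnd n hn x _ (inv_all n hn x 0)))
  | succ t ih =>
    simp only [bpRun]
    simp only [ih, decode_encode]
    exact Nat.mod_eq_of_lt (encode_lt hn (inv_bnd n hn x _ (inv_all n hn x (t+1))))

end Stmt17

/-- There is a deterministic comparison-based algorithm computing the maximum over all
`n` sliding windows of length `n` in a string of length `2n-1`, using `O(n log n)`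
comparisons and `O(log n)` words (hence `O(log² n)` bits, i.e. `2^{O(log² n)}` states)
of working memory. -/
theorem stmt17 :
    ∃ C : ℕ, 0 < C ∧ ∀ n : ℕ, 2 ≤ n →
      ∃ (M : ℕ) (start : Fin M) (query : Fin M → ℕ × ℕ)
        (next : Fin M → Bool → Fin M) (emit : Fin M → Option (ℕ × ℕ)) (T : ℕ),
        M ≤ 2 ^ (C * (Nat.log 2 n + 1) ^ 2) ∧
        T ≤ C * n * (Nat.log 2 n + 1) ∧
        ∀ (α : Type) [LinearOrder α], ∀ x : ℕ → α,
          (∀ i, i < n → ∃ t ≤ T, ∃ p,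
            emit (bpRun start query next x t) = some (i, p) ∧
            i ≤ p ∧ p < i + n ∧ ∀ j, i ≤ j → j < i + n → x j ≤ x p) ∧
          (∀ t ≤ T, ∀ i p, emit (bpRun start query next x t) = some (i, p) →
            i < n ∧ i ≤ p ∧ p < i + n ∧ ∀ j, i ≤ j → j < i + n → x j ≤ x p) := by

  refine ⟨1000, by norm_num, ?_⟩
  intro n hn
  have hnL : n < 2 ^ (Nat.log 2 n + 1) := Nat.lt_pow_succ_log_self (by norm_num) n
  have hM0 : 0 < Stmt17.Mn n := Stmt17.Mpos n hn
  refine ⟨Stmt17.Mn n,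
    ⟨Stmt17.stEncode (Stmt17.scanEntry 0 (n-1)) % Stmt17.Mn n, Nat.mod_lt _ (Stmt17.Mpos n hn)⟩,
    fun s => Stmt17.queryS n (Stmt17.stDecode s.val),
    fun s c => ⟨Stmt17.stEncode (Stmt17.stepS n (Stmt17.stDecode s.val) c) % Stmt17.Mn n,
      Nat.mod_lt _ (Stmt17.Mpos n hn)⟩,
    fun s => Stmt17.emitS (Stmt17.stDecode s.val),
    2 * n * (Nat.log 2 n + 2), ?_, ?_, ?_⟩
  · -- memory bound
    have h2n : 2 * n ≤ 2 ^ (Nat.log 2 n + 2) := by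
      have h : (2:ℕ) ^ (Nat.log 2 n + 2) = 2 * 2 ^ (Nat.log 2 n + 1) := by ring
      omega
    calc Stmt17.Mn n = (2*n)^32 := rfl
      _ ≤ (2 ^ (Nat.log 2 n + 2))^32 := Nat.pow_le_pow_left h2n 32
      _ = 2 ^ ((Nat.log 2 n + 2) * 32) := by rw [← pow_mul]
      _ ≤ 2 ^ (1000 * (Nat.log 2 n + 1)^2) := Nat.pow_le_pow_right (by norm_num) (by nlinarith)
  · -- time bound
    nlinarith [Nat.zero_le (Nat.log 2 n)]
  · intro α _ x
    constructor
    · intro i hi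
      obtain ⟨t', ht', pp, hem⟩ := Stmt17.live n hn x (Nat.log 2 n + 1) 0 0 (n-1) rfl
        (Nat.zero_le _) (le_refl _) (by omega) i (Nat.zero_le _) (by omega)
      have hcor := Stmt17.emit_correct n hn x _ (Stmt17.inv_all n hn x t') i pp hem
      have htime : t' ≤ 2 * n * (Nat.log 2 n + 2) := by
        have h : 0 + 2 * n * (Nat.log 2 n + 1 + 1) = 2 * n * (Nat.log 2 n + 2) := by ring
        omega
      refine ⟨t', htime, pp, ?_, hcor.2.1, hcor.2.2.1, hcor.2.2.2⟩
      simp only [Stmt17.bridge n hn x t', Stmt17.decode_encode]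
      exact hem
    · intro t ht i pp hem
      simp only [Stmt17.bridge n hn x t, Stmt17.decode_encode] at hem
      exact Stmt17.emit_correct n hn x _ (Stmt17.inv_all n hn x t) i pp hem
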